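/- Let p be a prime and let σ_j = Σ_{i=0}^{j} p^i. Suppose n = Σ_{j=ℓ}^{k} b_j σ_j where the b_j are integers with b_k ≥ 1, 0 ≤ b_j ≤ p−1 for all j ≠ ℓ, and 1 ≤ b_ℓ ≤ p. Then λ_p(n) ≥ Σ_{j=ℓ}^{k} b_j p^j. -/

import Mathlib

/-- The row space of a matrix over `ZMod p`: all linear combinations of its rows. -/
def rowSpace {p m n : ℕ} (M : Matrix (Fin m) (Fin n) (ZMod p)) :
    Submodule (ZMod p) (Fin n → ZMod p) :=
  Submodule.span (ZMod p) {v | ∃ i, v = M i}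

/-- The capacity of a matrix: the maximal Hamming weight of a vector in its row space. -/
noncomputable def capacity {p m n : ℕ} (M : Matrix (Fin m) (Fin n) (ZMod p)) : ℕ :=
  sSup (hammingNorm '' (rowSpace M : Set (Fin n → ZMod p)))

/-- `lambdaP p n` is the minimum capacity over all matrices over `𝔽_p`
with `n` columns, none of which is a zero column.  (For `n = 0` this gives `0`.) -/
noncomputable def lambdaP (p n : ℕ) : ℕ :=
  sInf {c | ∃ (m : ℕ) (M : Matrix (Fin m) (Fin n) (ZMod p)),
    (∀ j, ∃ i, M i j ≠ 0) ∧ c = capacity M}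

/-- `sigmaP p k = 1 + p + ⋯ + p^k`. -/
def sigmaP (p k : ℕ) : ℕ := ∑ j ∈ Finset.range (k + 1), p ^ j

/-! ### Auxiliary arithmetic: the function `Sfun p x = ∑ i, ⌊x / p^i⌋` -/

def Sfun (p x : ℕ) : ℕ := ∑ i ∈ Finset.range (x + 1), x / p ^ i

lemma Sfun_zero (p : ℕ) : Sfun p 0 = 0 := by simp [Sfun]

lemma Sfun_mono (p : ℕ) {x y : ℕ} (h : x ≤ y) : Sfun p x ≤ Sfun p y := by
  unfold Sfun
  calc ∑ i ∈ Finset.range (x+1), x / p ^ i ≤ ∑ i ∈ Finset.range (x+1), y / p ^ i :=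
        Finset.sum_le_sum (fun i _ => Nat.div_le_div_right h)
    _ ≤ ∑ i ∈ Finset.range (y+1), y / p ^ i :=
        Finset.sum_le_sum_of_subset (Finset.range_subset_range.2 (by omega))

lemma Sfun_eq_sum (p : ℕ) (hp : 2 ≤ p) (x N : ℕ) (h : x + 1 ≤ N) :
    Sfun p x = ∑ i ∈ Finset.range N, x / p ^ i := by
  unfold Sfun
  apply Finset.sum_subset (Finset.range_subset_range.2 h)
  intro i _ hi
  simp only [Finset.mem_range, not_lt] at hi
  apply Nat.div_eq_of_lt
  calc x < 2 ^ x := Nat.lt_two_pow_self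
    _ ≤ 2 ^ i := Nat.pow_le_pow_right (by norm_num) (by omega)
    _ ≤ p ^ i := Nat.pow_le_pow_left hp i

lemma Sfun_rec (p : ℕ) (hp : 2 ≤ p) (x : ℕ) : Sfun p x = x + Sfun p (x / p) := by
  rcases Nat.eq_zero_or_pos x with rfl | hx
  · simp [Sfun]
  have hlt : x / p < x := Nat.div_lt_self hx (by omega)
  have h1 : Sfun p (x / p) = ∑ i ∈ Finset.range x, (x / p) / p ^ i :=
    Sfun_eq_sum p hp _ x (by omega)
  have h2 : Sfun p x = (∑ i ∈ Finset.range x, (x / p) / p ^ i) + x := by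
    show (∑ i ∈ Finset.range (x+1), x / p ^ i) = _
    rw [Finset.sum_range_succ']
    have he : ∀ i, x / p ^ (i + 1) = (x / p) / p ^ i := by
      intro i
      rw [Nat.div_div_eq_div_mul, pow_succ']
    simp only [he, pow_zero, Nat.div_one]
  rw [h2, ← h1]
  omega

lemma sigmaP_succ (p j : ℕ) : sigmaP p (j + 1) = sigmaP p j + p ^ (j + 1) := by
  unfold sigmaP
  rw [Finset.sum_range_succ]

lemma Sfun_base (p : ℕ) (hp : 2 ≤ p) :
    ∀ (m : ℕ) (d : ℕ → ℕ), (∀ j, j ≤ m → d j ≤ p - 1) →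
    Sfun p (∑ j ∈ Finset.range (m + 1), d j * p ^ j)
      = ∑ j ∈ Finset.range (m + 1), d j * sigmaP p j := by
  intro m
  induction m with
  | zero =>
    intro d hd
    have hd0 : d 0 < p := by have := hd 0 le_rfl; omega
    simp only [zero_add, Finset.sum_range_one, pow_zero, mul_one]
    rw [Sfun_rec p hp, Nat.div_eq_of_lt hd0, Sfun_zero]
    have : sigmaP p 0 = 1 := by simp [sigmaP]
    rw [this]
    ring
  | succ m ih =>
    intro d hd
    set y := ∑ j ∈ Finset.range (m + 1), d (j + 1) * p ^ j with hy
    have hd0 : d 0 < p := by have := hd 0 (by omega); omega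
    have hx : ∑ j ∈ Finset.range (m + 2), d j * p ^ j = d 0 + p * y := by
      rw [Finset.sum_range_succ']
      simp only [pow_zero, mul_one]
      rw [add_comm, hy, Finset.mul_sum]
      congr 1
      apply Finset.sum_congr rfl
      intro j _
      rw [pow_succ']
      ring
    have hdiv : (d 0 + p * y) / p = y := by
      rw [Nat.add_mul_div_left _ _ (by omega : 0 < p), Nat.div_eq_of_lt hd0]
      omega
    rw [hx, Sfun_rec p hp, hdiv, ih (fun j => d (j + 1)) (fun j hj => hd (j + 1) (by omega))]
    rw [Finset.sum_range_succ' (fun j => d j * sigmaP p j)]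
    simp only [sigmaP_succ]
    have : sigmaP p 0 = 1 := by simp [sigmaP]
    rw [this]
    simp only [Nat.mul_add]
    rw [Finset.sum_add_distrib, hy, Finset.mul_sum]
    have : ∑ j ∈ Finset.range (m+1), d (j+1) * p ^ (j+1)
        = ∑ j ∈ Finset.range (m+1), p * (d (j+1) * p ^ j) := by
      apply Finset.sum_congr rfl
      intro j _
      rw [pow_succ']
      ring
    rw [this]
    ring

lemma arith_key (p : ℕ) (hp : 2 ≤ p) :
    ∀ (ℓ k : ℕ) (b : ℕ → ℕ), ℓ ≤ k →
    (∀ j, ℓ ≤ j → j ≤ k → j ≠ ℓ → b j ≤ p - 1) →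
    1 ≤ b ℓ → b ℓ ≤ p →
    Sfun p ((∑ j ∈ Finset.Icc ℓ k, b j * p ^ j) - 1) + 1
      ≤ ∑ j ∈ Finset.Icc ℓ k, b j * sigmaP p j := by
  intro ℓ
  induction ℓ with
  | zero =>
    intro k b hk hbj hb1 hb2
    have hicc : Finset.Icc 0 k = Finset.range (k + 1) := by
      rw [← Finset.Ico_add_one_right_eq_Icc, ← Finset.range_eq_Ico]
    rw [hicc]
    set d : ℕ → ℕ := fun j => if j = 0 then b 0 - 1 else b j with hdd
    have hsum : ∀ (g : ℕ → ℕ), ∑ j ∈ Finset.range (k+1), g j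
        = (∑ j ∈ Finset.range k, g (j+1)) + g 0 := fun g => Finset.sum_range_succ' g k
    have hCd : (∑ j ∈ Finset.range (k+1), b j * p ^ j) - 1
        = ∑ j ∈ Finset.range (k+1), d j * p ^ j := by
      rw [hsum (fun j => b j * p ^ j), hsum (fun j => d j * p ^ j)]
      have h0 : d 0 = b 0 - 1 := by simp [hdd]
      have hrest : ∑ j ∈ Finset.range k, d (j+1) * p ^ (j+1)
          = ∑ j ∈ Finset.range k, b (j+1) * p ^ (j+1) := by
        apply Finset.sum_congr rfl
        intro j _
        simp [hdd]
      rw [h0, hrest]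
      simp only [pow_zero, mul_one]
      omega
    have hdbound : ∀ j, j ≤ k → d j ≤ p - 1 := by
      intro j hj
      rcases Nat.eq_zero_or_pos j with rfl | hjpos
      · simp [hdd]; omega
      · have := hbj j (Nat.zero_le _) hj (by omega)
        simp only [hdd]
        rw [if_neg (by omega)]
        exact this
    rw [hCd, Sfun_base p hp k d hdbound]
    rw [hsum (fun j => d j * sigmaP p j), hsum (fun j => b j * sigmaP p j)]
    have hrest : ∑ j ∈ Finset.range k, d (j+1) * sigmaP p (j+1)
        = ∑ j ∈ Finset.range k, b (j+1) * sigmaP p (j+1) := by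
      apply Finset.sum_congr rfl
      intro j _
      simp [hdd]
    have hσ0 : sigmaP p 0 = 1 := by simp [sigmaP]
    have h0 : d 0 = b 0 - 1 := by simp [hdd]
    rw [hrest, h0, hσ0]
    omega
  | succ ℓ ih =>
    intro k b hk hbj hb1 hb2
    obtain ⟨k', rfl⟩ : ∃ k', k = k' + 1 := ⟨k - 1, by omega⟩
    have hmap : ∀ (f : ℕ → ℕ), ∑ j ∈ Finset.Icc (ℓ+1) (k'+1), f j
        = ∑ i ∈ Finset.Icc ℓ k', f (i+1) := by
      intro f
      rw [← Finset.map_add_right_Icc ℓ k' 1, Finset.sum_map]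
      rfl
    have hℓk' : ℓ ≤ k' := by omega
    set C' := ∑ i ∈ Finset.Icc ℓ k', b (i+1) * p ^ i with hC'
    set n' := ∑ i ∈ Finset.Icc ℓ k', b (i+1) * sigmaP p i with hn'
    have hC : ∑ j ∈ Finset.Icc (ℓ+1) (k'+1), b j * p ^ j = p * C' := by
      rw [hmap (fun j => b j * p ^ j), hC', Finset.mul_sum]
      apply Finset.sum_congr rfl
      intro i _
      rw [pow_succ']
      ring
    have hN : ∑ j ∈ Finset.Icc (ℓ+1) (k'+1), b j * sigmaP p j = n' + p * C' := by
      rw [hmap (fun j => b j * sigmaP p j), hn', hC', Finset.mul_sum]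
      rw [← Finset.sum_add_distrib]
      apply Finset.sum_congr rfl
      intro i _
      rw [sigmaP_succ, pow_succ']
      ring
    have hC'1 : 1 ≤ C' := by
      calc 1 ≤ b (ℓ+1) * p ^ ℓ := by
            have : 1 ≤ p ^ ℓ := Nat.one_le_pow _ _ (by omega)
            exact Nat.one_le_iff_ne_zero.2 (by positivity)
        _ ≤ C' := Finset.single_le_sum (f := fun i => b (i+1) * p ^ i)
              (fun i _ => Nat.zero_le _) (Finset.mem_Icc.2 ⟨le_rfl, hℓk'⟩)
    have hih := ih k' (fun j => b (j+1)) hℓk'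
      (fun j hj1 hj2 hj3 => hbj (j+1) (by omega) (by omega) (by omega))
      hb1 hb2
    have hdiv : (p * C' - 1) / p = C' - 1 := by
      obtain ⟨c, hc⟩ : ∃ c, C' = c + 1 := ⟨C' - 1, by omega⟩
      have h2 : p * (c + 1) - 1 = (p - 1) + c * p := by
        rw [Nat.mul_add, mul_comm]
        omega
      rw [hc, h2, Nat.add_mul_div_right _ _ (by omega : 0 < p),
        Nat.div_eq_of_lt (by omega)]
      omega
    have hih' : Sfun p (C' - 1) + 1 ≤ n' := hih
    rw [hC, hN, Sfun_rec p hp, hdiv]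
    have hpc : 1 ≤ p * C' := Nat.one_le_iff_ne_zero.2 (by positivity)
    omega

/-! ### Linear-algebraic counting lemmas -/

section Count
variable {p : ℕ} [Fact p.Prime]

lemma card_filter_affine_ne (a b : ZMod p) (hb : b ≠ 0) :
    (Finset.univ.filter (fun t : ZMod p => a + t * b ≠ 0)).card = p - 1 := by
  have hiff : ∀ t : ZMod p, a + t * b = 0 ↔ t = -a / b := by
    intro t
    rw [eq_div_iff hb]
    constructor
    · intro h; linear_combination h
    · intro h; linear_combination h
  have h1 : Finset.univ.filter (fun t : ZMod p => a + t * b = 0) = {-a / b} := by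
    ext t
    simp only [Finset.mem_filter, Finset.mem_univ, true_and, Finset.mem_singleton, hiff]
  have h2 := Finset.card_filter_add_card_filter_not
    (s := (Finset.univ : Finset (ZMod p))) (p := fun t => a + t * b = 0)
  rw [h1] at h2
  simp only [Finset.card_singleton, Finset.card_univ, ZMod.card] at h2
  have hp2 : 2 ≤ p := (Fact.out : p.Prime).two_le
  have : (Finset.univ.filter (fun t : ZMod p => ¬ a + t * b = 0)).card
      = (Finset.univ.filter (fun t : ZMod p => a + t * b ≠ 0)).card := rfl
  omega

variable {ι : Type} [Fintype ι] [DecidableEq ι]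

lemma shift_bound (V : Submodule (ZMod p) (ι → ZMod p)) (v u : ι → ZMod p)
    (hv : v ∈ V) (hu : u ∈ V) (c₀ : ℕ)
    (hmax : ∀ w ∈ V, hammingNorm w ≤ c₀) (hnv : hammingNorm v = c₀) :
    p * (Finset.univ.filter (fun j => v j = 0 ∧ u j ≠ 0)).card ≤ c₀ := by
  have hp2 : 2 ≤ p := (Fact.out : p.Prime).two_le
  set A := (Finset.univ.filter (fun j => v j = 0 ∧ u j ≠ 0)).card with hA
  have key : ∑ t : ZMod p, hammingNorm (u + t • v) = (p - 1) * c₀ + p * A := by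
    have hterm : ∀ t : ZMod p, hammingNorm (u + t • v)
        = ∑ j : ι, if u j + t * v j ≠ 0 then 1 else 0 := by
      intro t
      simp only [hammingNorm, Finset.card_filter, Pi.add_apply, Pi.smul_apply, smul_eq_mul]
    simp only [hterm]
    rw [Finset.sum_comm]
    have hinner : ∀ j : ι, (∑ t : ZMod p, if u j + t * v j ≠ 0 then 1 else 0)
        = if v j = 0 then (if u j ≠ 0 then p else 0) else p - 1 := by
      intro j
      by_cases hvj : v j = 0
      · simp only [hvj, mul_zero, add_zero, if_pos]
        rw [Finset.sum_const, Finset.card_univ, ZMod.card, smul_eq_mul]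
        by_cases huj : u j = 0 <;> simp [huj]
      · rw [if_neg hvj, ← Finset.card_filter]
        exact card_filter_affine_ne (u j) (v j) hvj
    simp only [hinner]
    rw [Finset.sum_ite]
    have hleft : ∑ j ∈ Finset.univ.filter (fun j => v j = 0),
        (if u j ≠ 0 then p else 0) = p * A := by
      rw [Finset.sum_ite, Finset.sum_const, Finset.sum_const, smul_zero, add_zero,
        Finset.filter_filter, hA, smul_eq_mul, mul_comm]
    have hright : ∑ _j ∈ Finset.univ.filter (fun j => ¬ v j = 0), (p - 1) = (p - 1) * c₀ := by
      have hcard : (Finset.univ.filter (fun j => ¬ v j = 0)).card = c₀ := by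
        rw [← hnv]; rfl
      rw [Finset.sum_const, smul_eq_mul, hcard, mul_comm]
    rw [hleft, hright]
    omega
  have bound : ∑ t : ZMod p, hammingNorm (u + t • v) ≤ p * c₀ := by
    calc ∑ t : ZMod p, hammingNorm (u + t • v) ≤ ∑ _t : ZMod p, c₀ :=
          Finset.sum_le_sum (fun t _ => hmax _ (V.add_mem hu (V.smul_mem t hv)))
      _ = p * c₀ := by rw [Finset.sum_const, Finset.card_univ, ZMod.card, smul_eq_mul]
  have hsub : (p - 1) * c₀ + c₀ = p * c₀ := by
    rw [Nat.sub_one_mul]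
    have : c₀ ≤ p * c₀ := Nat.le_mul_of_pos_left c₀ (by omega)
    omega
  omega

end Count

lemma card_le_Sfun (p : ℕ) (hp : p.Prime) :
    ∀ (c : ℕ) (ι : Type) [Fintype ι] [DecidableEq ι]
      (V : Submodule (ZMod p) (ι → ZMod p)),
      (∀ j : ι, ∃ v ∈ V, v j ≠ 0) → (∀ v ∈ V, hammingNorm v ≤ c) →
      Fintype.card ι ≤ Sfun p c := by
  haveI : Fact p.Prime := ⟨hp⟩
  haveI : NeZero p := ⟨hp.ne_zero⟩
  intro c
  induction c using Nat.strong_induction_on with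
  | _ c IH =>
    intro ι _ _ V hsupp hbound
    cases isEmpty_or_nonempty ι with
    | inl h =>
      simp [Fintype.card_eq_zero]
    | inr h =>
      haveI : Nonempty ↥V := ⟨⟨0, V.zero_mem⟩⟩
      obtain ⟨v₀, hv₀⟩ := Finite.exists_max (fun w : ↥V => hammingNorm (w : ι → ZMod p))
      set v : ι → ZMod p := (v₀ : ι → ZMod p) with hvdef
      set c₀ := hammingNorm v with hc₀
      obtain ⟨j₀⟩ := h
      obtain ⟨w, hwV, hwj⟩ := hsupp j₀
      have hc₀pos : 1 ≤ c₀ := by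
        have h1 : 1 ≤ hammingNorm w := by
          have hmem : j₀ ∈ Finset.univ.filter (fun j => w j ≠ 0) := by
            simp [hwj]
          exact Finset.card_pos.2 ⟨j₀, hmem⟩
        exact le_trans h1 (hv₀ ⟨w, hwV⟩)
      have hc₀c : c₀ ≤ c := hbound v v₀.2
      have hmax : ∀ u ∈ V, hammingNorm u ≤ c₀ := fun u hu => hv₀ ⟨u, hu⟩
      set π := LinearMap.funLeft (ZMod p) (ZMod p) (Subtype.val : {j : ι // v j = 0} → ι)
        with hπ
      set W := V.map π with hW
      have hWsupp : ∀ j' : {j : ι // v j = 0}, ∃ u ∈ W, u j' ≠ 0 := by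
        intro j'
        obtain ⟨u, huV, huj⟩ := hsupp j'.1
        exact ⟨π u, Submodule.mem_map_of_mem huV, huj⟩
      have hWbound : ∀ u ∈ W, hammingNorm u ≤ c₀ / p := by
        intro u hu
        obtain ⟨g, hgV, rfl⟩ := hu
        have hnorm : hammingNorm (π g)
            = (Finset.univ.filter (fun j => v j = 0 ∧ g j ≠ 0)).card := by
          rw [show hammingNorm (π g)
              = (Finset.univ.filter (fun j' : {j : ι // v j = 0} => g j'.1 ≠ 0)).card from rfl,
            ← Fintype.card_subtype, ← Fintype.card_subtype]
          exact Fintype.card_congr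
            (Equiv.subtypeSubtypeEquivSubtypeInter (fun j => v j = 0) (fun j => g j ≠ 0))
        have hsb := shift_bound V v g v₀.2 hgV c₀ hmax rfl
        rw [Nat.le_div_iff_mul_le hp.pos, hnorm, mul_comm]
        exact hsb
      have hlt : c₀ / p < c :=
        lt_of_lt_of_le (Nat.div_lt_self hc₀pos hp.one_lt) hc₀c
      have hcard' : Fintype.card {j : ι // v j = 0} ≤ Sfun p (c₀ / p) :=
        IH _ hlt _ W hWsupp hWbound
      have hsplit : c₀ + Fintype.card {j : ι // v j = 0} = Fintype.card ι := by
        rw [Fintype.card_subtype]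
        have h1 := Finset.card_filter_add_card_filter_not
          (s := (Finset.univ : Finset ι)) (p := fun j => v j ≠ 0)
        have h2 : Finset.univ.filter (fun j => ¬ v j ≠ 0)
            = Finset.univ.filter (fun j => v j = 0) := by
          apply Finset.filter_congr
          intro j _
          simp [not_not]
        rw [h2] at h1
        rw [← Finset.card_univ, ← h1, hc₀]
        rfl
      calc Fintype.card ι = c₀ + Fintype.card {j : ι // v j = 0} := hsplit.symm
        _ ≤ c₀ + Sfun p (c₀ / p) := by omega
        _ = Sfun p c₀ := (Sfun_rec p hp.two_le c₀).symm
        _ ≤ Sfun p c := Sfun_mono p hc₀c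

theorem statement2 (p : ℕ) (hp : p.Prime) (ℓ k n : ℕ) (hℓk : ℓ ≤ k)
    (b : ℕ → ℕ)
    (hbk : 1 ≤ b k)
    (hbj : ∀ j, ℓ ≤ j → j ≤ k → j ≠ ℓ → b j ≤ p - 1)
    (hbℓ1 : 1 ≤ b ℓ) (hbℓ2 : b ℓ ≤ p)
    (hn : n = ∑ j ∈ Finset.Icc ℓ k, b j * sigmaP p j) :
    lambdaP p n ≥ ∑ j ∈ Finset.Icc ℓ k, b j * p ^ j := by
  have hp2 : 2 ≤ p := hp.two_le
  haveI : Fact p.Prime := ⟨hp⟩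
  haveI : NeZero p := ⟨hp.ne_zero⟩
  haveI : Fact (1 < p) := ⟨hp.one_lt⟩
  set C := ∑ j ∈ Finset.Icc ℓ k, b j * p ^ j with hCdef
  have hne : {c | ∃ (m : ℕ) (M : Matrix (Fin m) (Fin n) (ZMod p)),
      (∀ j, ∃ i, M i j ≠ 0) ∧ c = capacity M}.Nonempty := by
    refine ⟨capacity (fun _ _ => (1 : ZMod p) : Matrix (Fin 1) (Fin n) (ZMod p)),
      1, _, ?_, rfl⟩
    intro j
    exact ⟨0, one_ne_zero⟩
  have harith := arith_key p hp2 ℓ k b hℓk hbj hbℓ1 hbℓ2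
  rw [← hn, ← hCdef] at harith
  have hmain : ∀ c ∈ {c | ∃ (m : ℕ) (M : Matrix (Fin m) (Fin n) (ZMod p)),
      (∀ j, ∃ i, M i j ≠ 0) ∧ c = capacity M}, C ≤ c := by
    rintro c ⟨m, M, hcol, rfl⟩
    have hsupp : ∀ j : Fin n, ∃ v ∈ rowSpace M, v j ≠ 0 := by
      intro j
      obtain ⟨i, hi⟩ := hcol j
      exact ⟨M i, Submodule.subset_span ⟨i, rfl⟩, hi⟩
    have hbdd : BddAbove (hammingNorm '' (rowSpace M : Set (Fin n → ZMod p))) := by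
      refine ⟨n, ?_⟩
      rintro x ⟨v, -, rfl⟩
      calc hammingNorm v ≤ (Finset.univ : Finset (Fin n)).card :=
            Finset.card_le_card (Finset.filter_subset _ _)
        _ = n := by simp
    have hcap : ∀ v ∈ rowSpace M, hammingNorm v ≤ capacity M := by
      intro v hv
      exact le_csSup hbdd ⟨v, hv, rfl⟩
    have hn_le : n ≤ Sfun p (capacity M) := by
      have := card_le_Sfun p hp (capacity M) (Fin n) (rowSpace M) hsupp hcap
      simpa using this
    by_contra hlt
    push_neg at hlt
    have hmono : Sfun p (capacity M) ≤ Sfun p (C - 1) := Sfun_mono p (by omega)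
    omega
  exact le_csInf hne hmain
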